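/- Let R₁ ∈ ℝ[z,z⁻¹]^{m×n} and R₂ ∈ ℝ[z,z⁻¹]^{p×n} be Laurent polynomial matrices such that the stacked operator w ↦ (R₁(σ)w, R₂(σ)w) from (ℝⁿ)^ℤ to (ℝᵐ)^ℤ × (ℝᵖ)^ℤ is surjective. Then: (a) for any nonempty sets E₁, E₂ ⊆ (ℝⁿ)^ℤ with E₁ saturated with respect to ker∞R₁ and E₂ saturated with respect to ker∞R₂, the intersection E₁ ∩ E₂ is nonempty; and (b) if E₁, E₁' are nonempty and saturated with respect to ker∞R₁, E₂, E₂' are nonempty and saturated with respect to ker∞R₂, and E₁ ∩ E₂ = E₁' ∩ E₂', then E₁ = E₁' and E₂ = E₂'. -/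

import Mathlib

open Pointwise

/-- The shift operator `R(σ)` associated with a Laurent polynomial matrix
`R ∈ ℝ[z,z⁻¹]^{p×n}`: `(R(σ)w)(t)ᵢ = Σⱼ Σ_k coeff_k(Rᵢⱼ) · w(t+k)ⱼ`. -/
noncomputable def shiftOp {p n : ℕ} (R : Matrix (Fin p) (Fin n) (LaurentPolynomial ℝ))
    (w : ℤ → Fin n → ℝ) : ℤ → Fin p → ℝ :=
  fun t i => ∑ j, Finsupp.sum (R i j).coeff fun k c => c * w (t + k) j

lemma shiftOp_add {p n : ℕ} (R : Matrix (Fin p) (Fin n) (LaurentPolynomial ℝ))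
    (x y : ℤ → Fin n → ℝ) : shiftOp R (x + y) = shiftOp R x + shiftOp R y := by
  funext t i
  simp only [shiftOp, Pi.add_apply, mul_add, Finsupp.sum_add, Finset.sum_add_distrib]

lemma shiftOp_sub {p n : ℕ} (R : Matrix (Fin p) (Fin n) (LaurentPolynomial ℝ))
    (x y : ℤ → Fin n → ℝ) : shiftOp R (x - y) = shiftOp R x - shiftOp R y := by
  have h := shiftOp_add R (x - y) y
  rw [sub_add_cancel] at h
  rw [h]; abel

/-- Key step: given any `x` and a set `E₂` saturated w.r.t. `ker∞R₂` containing `v₂`,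
there is `u ∈ E₂` with `u - x ∈ ker∞R₁`. -/
lemma key_step {m p n : ℕ}
    (R₁ : Matrix (Fin m) (Fin n) (LaurentPolynomial ℝ))
    (R₂ : Matrix (Fin p) (Fin n) (LaurentPolynomial ℝ))
    (hsurj : Function.Surjective
      (fun w : ℤ → Fin n → ℝ => (shiftOp R₁ w, shiftOp R₂ w)))
    (x v₂ : ℤ → Fin n → ℝ) (E₂ : Set (ℤ → Fin n → ℝ)) (hv₂ : v₂ ∈ E₂)
    (hE₂ : E₂ + {w : ℤ → Fin n → ℝ | shiftOp R₂ w = 0} = E₂) :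
    ∃ u ∈ E₂, shiftOp R₁ (u - x) = 0 := by
  obtain ⟨w, hw⟩ := hsurj (0, shiftOp R₂ v₂ - shiftOp R₂ x)
  have hw1 : shiftOp R₁ w = 0 := congrArg Prod.fst hw
  have hw2 : shiftOp R₂ w = shiftOp R₂ v₂ - shiftOp R₂ x := congrArg Prod.snd hw
  refine ⟨x + w, ?_, by simpa using hw1⟩
  have hker : shiftOp R₂ (x + w - v₂) = 0 := by
    rw [shiftOp_sub, shiftOp_add, hw2]; abel
  have : v₂ + (x + w - v₂) ∈ E₂ + {w : ℤ → Fin n → ℝ | shiftOp R₂ w = 0} :=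
    Set.add_mem_add hv₂ hker
  rwa [hE₂, add_sub_cancel] at this

lemma subset_step {m p n : ℕ}
    (R₁ : Matrix (Fin m) (Fin n) (LaurentPolynomial ℝ))
    (R₂ : Matrix (Fin p) (Fin n) (LaurentPolynomial ℝ))
    (hsurj : Function.Surjective
      (fun w : ℤ → Fin n → ℝ => (shiftOp R₁ w, shiftOp R₂ w)))
    (E₁ E₁' E₂ : Set (ℤ → Fin n → ℝ)) (hne₂ : E₂.Nonempty)
    (hE₁ : E₁ + {w : ℤ → Fin n → ℝ | shiftOp R₁ w = 0} = E₁)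
    (hE₁' : E₁' + {w : ℤ → Fin n → ℝ | shiftOp R₁ w = 0} = E₁')
    (hE₂ : E₂ + {w : ℤ → Fin n → ℝ | shiftOp R₂ w = 0} = E₂)
    (hsub : E₁ ∩ E₂ ⊆ E₁') : E₁ ⊆ E₁' := by
  intro x hx
  obtain ⟨v₂, hv₂⟩ := hne₂
  obtain ⟨u, huE₂, hker⟩ := key_step R₁ R₂ hsurj x v₂ E₂ hv₂ hE₂
  have huE₁ : u ∈ E₁ := by
    have : x + (u - x) ∈ E₁ + {w : ℤ → Fin n → ℝ | shiftOp R₁ w = 0} :=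
      Set.add_mem_add hx hker
    rwa [hE₁, add_sub_cancel] at this
  have huE₁' : u ∈ E₁' := hsub ⟨huE₁, huE₂⟩
  have hker' : shiftOp R₁ (x - u) = 0 := by
    rw [shiftOp_sub] at hker ⊢
    rw [sub_eq_zero] at hker; rw [hker, sub_self]
  have : u + (x - u) ∈ E₁' + {w : ℤ → Fin n → ℝ | shiftOp R₁ w = 0} :=
    Set.add_mem_add huE₁' hker'
  rwa [hE₁', add_sub_cancel] at this

/-- Let `R₁ ∈ ℝ[z,z⁻¹]^{m×n}` and `R₂ ∈ ℝ[z,z⁻¹]^{p×n}` be such that the stacked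
operator `w ↦ (R₁(σ)w, R₂(σ)w)` from `(ℝⁿ)^ℤ` to `(ℝᵐ)^ℤ × (ℝᵖ)^ℤ` is surjective. Then:
(a) for any nonempty sets `E₁, E₂ ⊆ (ℝⁿ)^ℤ` with `E₁` saturated with respect to `ker∞R₁`
(i.e. `E₁ + ker∞R₁ = E₁`) and `E₂` saturated with respect to `ker∞R₂`, the intersection
`E₁ ∩ E₂` is nonempty; and (b) if `E₁, E₁'` are nonempty and saturated w.r.t. `ker∞R₁`,
`E₂, E₂'` nonempty and saturated w.r.t. `ker∞R₂`, and `E₁ ∩ E₂ = E₁' ∩ E₂'`, then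
`E₁ = E₁'` and `E₂ = E₂'`. -/
theorem stacked_surjective_saturated_sets (m p n : ℕ)
    (R₁ : Matrix (Fin m) (Fin n) (LaurentPolynomial ℝ))
    (R₂ : Matrix (Fin p) (Fin n) (LaurentPolynomial ℝ))
    (hsurj : Function.Surjective
      (fun w : ℤ → Fin n → ℝ => (shiftOp R₁ w, shiftOp R₂ w))) :
    (∀ E₁ E₂ : Set (ℤ → Fin n → ℝ), E₁.Nonempty → E₂.Nonempty →
      E₁ + {w : ℤ → Fin n → ℝ | shiftOp R₁ w = 0} = E₁ →
      E₂ + {w : ℤ → Fin n → ℝ | shiftOp R₂ w = 0} = E₂ →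
      (E₁ ∩ E₂).Nonempty) ∧
    (∀ E₁ E₁' E₂ E₂' : Set (ℤ → Fin n → ℝ),
      E₁.Nonempty → E₁'.Nonempty → E₂.Nonempty → E₂'.Nonempty →
      E₁ + {w : ℤ → Fin n → ℝ | shiftOp R₁ w = 0} = E₁ →
      E₁' + {w : ℤ → Fin n → ℝ | shiftOp R₁ w = 0} = E₁' →
      E₂ + {w : ℤ → Fin n → ℝ | shiftOp R₂ w = 0} = E₂ →
      E₂' + {w : ℤ → Fin n → ℝ | shiftOp R₂ w = 0} = E₂' →
      E₁ ∩ E₂ = E₁' ∩ E₂' → E₁ = E₁' ∧ E₂ = E₂') := by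
  have hsurj' : Function.Surjective
      (fun w : ℤ → Fin n → ℝ => (shiftOp R₂ w, shiftOp R₁ w)) := by
    intro ⟨a, b⟩
    obtain ⟨w, hw⟩ := hsurj (b, a)
    refine ⟨w, ?_⟩
    have h1 : shiftOp R₁ w = b := congrArg Prod.fst hw
    have h2 : shiftOp R₂ w = a := congrArg Prod.snd hw
    simp [h1, h2]
  have nonempty : ∀ E₁ E₂ : Set (ℤ → Fin n → ℝ), E₁.Nonempty → E₂.Nonempty →
      E₁ + {w : ℤ → Fin n → ℝ | shiftOp R₁ w = 0} = E₁ →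
      E₂ + {w : ℤ → Fin n → ℝ | shiftOp R₂ w = 0} = E₂ →
      (E₁ ∩ E₂).Nonempty := by
    intro E₁ E₂ ⟨v₁, hv₁⟩ ⟨v₂, hv₂⟩ hE₁ hE₂
    obtain ⟨u, huE₂, hker⟩ := key_step R₁ R₂ hsurj v₁ v₂ E₂ hv₂ hE₂
    refine ⟨u, ?_, huE₂⟩
    have : v₁ + (u - v₁) ∈ E₁ + {w : ℤ → Fin n → ℝ | shiftOp R₁ w = 0} :=
      Set.add_mem_add hv₁ hker
    rwa [hE₁, add_sub_cancel] at this
  refine ⟨nonempty, ?_⟩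
  intro E₁ E₁' E₂ E₂' hne₁ hne₁' hne₂ hne₂' hE₁ hE₁' hE₂ hE₂' heq
  constructor
  · apply Set.Subset.antisymm
    · exact subset_step R₁ R₂ hsurj E₁ E₁' E₂ hne₂ hE₁ hE₁' hE₂
        (heq ▸ Set.inter_subset_left)
    · exact subset_step R₁ R₂ hsurj E₁' E₁ E₂' hne₂' hE₁' hE₁ hE₂'
        (heq ▸ Set.inter_subset_left)
  · apply Set.Subset.antisymm
    · refine subset_step R₂ R₁ hsurj' E₂ E₂' E₁ hne₁ hE₂ hE₂' hE₁ ?_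
      intro x hx
      exact (heq ▸ (Set.mem_inter hx.2 hx.1 : x ∈ E₁ ∩ E₂) : x ∈ E₁' ∩ E₂').2
    · refine subset_step R₂ R₁ hsurj' E₂' E₂ E₁' hne₁' hE₂' hE₂ hE₁' ?_
      intro x hx
      exact (heq ▸ (Set.mem_inter hx.2 hx.1 : x ∈ E₁' ∩ E₂') : x ∈ E₁ ∩ E₂).2
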